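/- arXiv:2206.13922 — 3 statements merged into one kernel-verified Lean document; each statement's English description precedes it below -/
import Mathlib

section
/- For real α, γ > 0 and real r ≠ 0, with ξ(n) = r/n^γ, one has ξ(n+1)(n−1)^α n^α + ξ(n−1)(n+1)^α n^α − 2ξ(n)(n−1)^α(n+1)^α = r·n^{2α−γ−2}·((α+γ)(α+γ+1) + o(1)) as n → ∞. -/
open Real Filter Set Topology

lemma hd1 (p : ℝ) {x : ℝ} (hx : -1 < x) :
    HasDerivAt (fun y : ℝ => (1+y)^p) (p * (1+x)^(p-1)) x := by
  have h : (1:ℝ) + x ≠ 0 := by linarith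
  have := ((hasDerivAt_id x).const_add 1).rpow_const (p := p) (Or.inl h)
  simpa using this

lemma hd2 (p : ℝ) {x : ℝ} (hx : x < 1) :
    HasDerivAt (fun y : ℝ => (1-y)^p) (-(p * (1-x)^(p-1))) x := by
  have h : (1:ℝ) - x ≠ 0 := by linarith
  have h0 := ((hasDerivAt_id x).const_sub 1).rpow_const (p := p) (Or.inl h)
  convert h0 using 1
  simp only [id_eq]
  simp only [id_eq]; ring

lemma key (β : ℝ) (hβ : 0 < β) :
    Tendsto (fun x : ℝ => ((1+x)^(-β) + (1-x)^(-β) - 2) / x^2) (𝓝[>] (0:ℝ))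
      (𝓝 (β*(β+1))) := by
  have hev : ∀ᶠ x in 𝓝[>] (0:ℝ), x ∈ Ioo (0:ℝ) 1 :=
    Ioo_mem_nhdsGT_of_mem (by norm_num : (0:ℝ) ∈ Ico (0:ℝ) 1)
  have hmono : 𝓝[>] (0:ℝ) ≤ 𝓝 0 := nhdsWithin_le_nhds
  have hdiv : Tendsto
      (fun x : ℝ => ((-β) * (1+x)^(-β-1) + -((-β) * (1-x)^(-β-1))) / (2*x))
      (𝓝[>] (0:ℝ)) (𝓝 (β*(β+1))) := by
    apply HasDerivAt.lhopital_zero_nhdsGT (f' := fun x =>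
        (-β)*((-β-1)*(1+x)^(-β-1-1)) + -((-β)*(-((-β-1)*(1-x)^(-β-1-1))))) (g' := fun _ => 2)
    · filter_upwards [hev] with x hx
      exact ((hd1 (-β-1) (by linarith [hx.1])).const_mul (-β)).add
        (((hd2 (-β-1) hx.2).const_mul (-β)).neg)
    · filter_upwards with x
      simpa using (hasDerivAt_id x).const_mul 2
    · filter_upwards with x; norm_num
    · have hc : ContinuousAt (fun x : ℝ => (-β) * (1+x)^(-β-1) + -((-β) * (1-x)^(-β-1))) 0 := by
        apply ContinuousAt.add
        · exact ((continuousAt_const.add continuousAt_id).rpow_const (Or.inl (by norm_num))).const_mul _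
        · exact (((continuousAt_const.sub continuousAt_id).rpow_const (Or.inl (by norm_num))).const_mul _).neg
      have := hc.tendsto.mono_left hmono
      simpa using this
    · have : Tendsto (fun x : ℝ => 2*x) (𝓝 0) (𝓝 (2*0)) :=
        (continuous_const.mul continuous_id).tendsto 0
      simpa using this.mono_left hmono
    · have hc : ContinuousAt (fun x : ℝ =>
          ((-β)*((-β-1)*(1+x)^(-β-1-1)) + -((-β)*(-((-β-1)*(1-x)^(-β-1-1))))) / 2) 0 := by
        apply ContinuousAt.div_const
        apply ContinuousAt.add
        · exact ((continuousAt_const.add continuousAt_id).rpow_const (Or.inl (by norm_num))).const_mul _ |>.const_mul _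
        · exact ((((continuousAt_const.sub continuousAt_id).rpow_const (Or.inl (by norm_num))).const_mul _).neg.const_mul _).neg
      have h2 := hc.tendsto.mono_left hmono
      have he : ((-β)*((-β-1)*((1:ℝ)+0)^(-β-1-1)) + -((-β)*(-((-β-1)*((1:ℝ)-0)^(-β-1-1))))) / 2
          = β*(β+1) := by norm_num; ring
      rw [he] at h2
      exact h2
  apply HasDerivAt.lhopital_zero_nhdsGT (f' := fun x =>
      (-β) * (1+x)^(-β-1) + -((-β) * (1-x)^(-β-1))) (g' := fun x => 2*x)
  · filter_upwards [hev] with x hx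
    have h1 := hd1 (-β) (by linarith [hx.1] : (-1:ℝ) < x)
    have h2 := hd2 (-β) hx.2
    exact (h1.add h2).sub_const 2
  · filter_upwards with x
    have : HasDerivAt (fun x : ℝ => x^2) (2*x) x := by
      simpa [mul_comm] using hasDerivAt_pow 2 x
    exact this
  · filter_upwards [hev] with x hx
    have := hx.1; positivity
  · have hc : ContinuousAt (fun x : ℝ => (1+x)^(-β) + (1-x)^(-β) - 2) 0 := by
      apply ContinuousAt.sub _ continuousAt_const
      exact ((continuousAt_const.add continuousAt_id).rpow_const (Or.inl (by norm_num))).add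
        ((continuousAt_const.sub continuousAt_id).rpow_const (Or.inl (by norm_num)))
    have h3 := hc.tendsto.mono_left hmono
    rw [show ((1:ℝ)+0)^(-β) + ((1:ℝ)-0)^(-β) - 2 = 0 from by norm_num] at h3
    exact h3
  · have : Tendsto (fun x : ℝ => x^2) (𝓝 0) (𝓝 ((0:ℝ)^2)) := (continuous_pow 2).tendsto 0
    simpa using this.mono_left hmono
  · exact hdiv

theorem stmt_13 (α γ r : ℝ) (hα : 0 < α) (hγ : 0 < γ) (hr : r ≠ 0) :
    Filter.Tendsto
      (fun n : ℕ =>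
        ((r / ((n : ℝ) + 1) ^ γ) * ((n : ℝ) - 1) ^ α * (n : ℝ) ^ α
          + (r / ((n : ℝ) - 1) ^ γ) * ((n : ℝ) + 1) ^ α * (n : ℝ) ^ α
          - 2 * (r / (n : ℝ) ^ γ) * ((n : ℝ) - 1) ^ α * ((n : ℝ) + 1) ^ α) /
        (r * (n : ℝ) ^ (2 * α - γ - 2)))
      Filter.atTop (nhds ((α + γ) * (α + γ + 1))) := by
  have hβ : 0 < α + γ := by linarith
  have hF : Tendsto
      (fun x : ℝ => (1-x^2)^α * (((1+x)^(-(α+γ)) + (1-x)^(-(α+γ)) - 2)/x^2))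
      (𝓝[>] (0:ℝ)) (𝓝 ((α+γ)*(α+γ+1))) := by
    have h1 : Tendsto (fun x : ℝ => (1-x^2)^α) (𝓝[>] (0:ℝ)) (𝓝 1) := by
      have hc : ContinuousAt (fun x : ℝ => (1-x^2)^α) 0 :=
        (continuousAt_const.sub (continuous_pow 2).continuousAt).rpow_const
          (Or.inl (by norm_num))
      have := hc.tendsto.mono_left (nhdsWithin_le_nhds (s := Set.Ioi (0:ℝ)))
      simpa using this
    simpa using h1.mul (key (α+γ) hβ)
  have hx : Tendsto (fun n : ℕ => 1/(n:ℝ)) atTop (𝓝[>] (0:ℝ)) := by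
    rw [tendsto_nhdsWithin_iff]
    refine ⟨tendsto_one_div_atTop_nhds_zero_nat, ?_⟩
    filter_upwards [eventually_gt_atTop 0] with n hn
    have : (0:ℝ) < n := by exact_mod_cast hn
    simp only [Set.mem_Ioi]
    positivity
  refine Filter.Tendsto.congr' ?_ (hF.comp hx)
  filter_upwards [eventually_ge_atTop 2] with n hn
  have hN : (2:ℝ) ≤ (n:ℝ) := by exact_mod_cast hn
  set N : ℝ := (n:ℝ) with hNdef
  have hN0 : (0:ℝ) < N := by linarith
  have hNm : (0:ℝ) < N - 1 := by linarith
  have hNp : (0:ℝ) < N + 1 := by linarith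
  have f1 : (1:ℝ) + 1/N = (N+1)/N := by field_simp
  have f2 : (1:ℝ) - 1/N = (N-1)/N := by field_simp
  have f3 : (1:ℝ) - (1/N)^2 = ((N-1)*(N+1))/N^2 := by field_simp; ring
  have r1 : (((N-1)*(N+1))/N^2)^α = (N-1)^α*(N+1)^α/(N^α)^2 := by
    rw [Real.div_rpow (by positivity) (by positivity),
      Real.mul_rpow hNm.le hNp.le, ← Real.rpow_natCast N 2,
      ← Real.rpow_natCast (N^α) 2, ← Real.rpow_mul hN0.le, ← Real.rpow_mul hN0.le]
    norm_num [mul_comm]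
  have r2 : ((N+1)/N)^(-(α+γ)) = (N^α*N^γ)/((N+1)^α*(N+1)^γ) := by
    rw [Real.rpow_neg (by positivity), Real.div_rpow hNp.le hN0.le,
      Real.rpow_add hNp, Real.rpow_add hN0, inv_div]
  have r3 : ((N-1)/N)^(-(α+γ)) = (N^α*N^γ)/((N-1)^α*(N-1)^γ) := by
    rw [Real.rpow_neg (by positivity), Real.div_rpow hNm.le hN0.le,
      Real.rpow_add hNm, Real.rpow_add hN0, inv_div]
  have r4 : N^(2*α-γ-2) = (N^α)^2/(N^γ*N^2) := by
    have e : 2*α-γ-2 = α*2 + -γ + -(2:ℝ) := by ring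
    rw [e, Real.rpow_add hN0, Real.rpow_add hN0, Real.rpow_neg hN0.le,
      Real.rpow_neg hN0.le, Real.rpow_mul hN0.le, ← Real.rpow_natCast (N^α) 2,
      ← Real.rpow_natCast N 2]
    norm_num
    ring
  have hAα : (N-1)^α ≠ 0 := by positivity
  have hBα : (N+1)^α ≠ 0 := by positivity
  have hCα : N^α ≠ 0 := by positivity
  have hAγ : (N-1)^γ ≠ 0 := by positivity
  have hBγ : (N+1)^γ ≠ 0 := by positivity
  have hCγ : N^γ ≠ 0 := by positivity
  have hNne : N ≠ 0 := hN0.ne'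
  show (1-(1/N)^2)^α * (((1+1/N)^(-(α+γ)) + (1-1/N)^(-(α+γ)) - 2)/(1/N)^2)
      = _
  rw [f1, f2, f3, r1, r2, r3, r4]
  field_simp
end

section
/- For real α, γ > 0 and real r ≠ 0, with ξ(n) = r/n^γ, one has ξ(n−1)ξ(n+1)·n^{2α} − ξ(n)^2·(n+1)^α(n−1)^α = r^2·n^{2α−2γ−2}·(α + γ + o(1)) as n → ∞. -/
open Real Filter

lemma alg_14 (α γ r : ℝ) (hr : r ≠ 0) (x : ℝ) (hx : 2 ≤ x) :
    ((r / (x - 1) ^ γ) * (r / (x + 1) ^ γ) * x ^ (2 * α)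
      - (r / x ^ γ) ^ 2 * (x + 1) ^ α * (x - 1) ^ α) /
      (r ^ 2 * x ^ (2 * α - 2 * γ - 2))
    = ((1 - (x ^ 2)⁻¹) ^ (-γ) - (1 - (x ^ 2)⁻¹) ^ α) / (x ^ 2)⁻¹ := by
  have hx0 : (0:ℝ) < x := by linarith
  have hA : (0:ℝ) < x - 1 := by linarith
  have hB : (0:ℝ) < x + 1 := by linarith
  have hAB : (0:ℝ) < (x - 1) * (x + 1) := mul_pos hA hB
  have h1 : 1 - (x ^ 2)⁻¹ = (x - 1) * (x + 1) / x ^ 2 := by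
    field_simp; ring
  have hx2 : x ^ 2 = x ^ ((2:ℕ):ℝ) := by rw [rpow_natCast]
  have hgam : (x:ℝ) ^ (2 * γ) = (x ^ γ) ^ 2 := by
    rw [← rpow_natCast (x ^ γ) 2, ← rpow_mul hx0.le]; norm_num; ring_nf
  have halp : (x:ℝ) ^ (2 * α) = (x ^ α) ^ 2 := by
    rw [← rpow_natCast (x ^ α) 2, ← rpow_mul hx0.le]; norm_num; ring_nf
  have hsplit : x ^ (2 * α - 2 * γ - 2) = x ^ (2 * α) / (x ^ (2 * γ) * x ^ 2) := by
    rw [show 2 * α - 2 * γ - 2 = 2 * α - (2 * γ + 2) by ring, rpow_sub hx0,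
      rpow_add hx0, hx2]
    norm_num
  have hx2g : (x ^ 2 : ℝ) ^ γ = x ^ (2 * γ) := by
    rw [hx2, ← rpow_mul hx0.le]; norm_num
  have hx2a : (x ^ 2 : ℝ) ^ α = x ^ (2 * α) := by
    rw [hx2, ← rpow_mul hx0.le]; norm_num
  rw [h1, div_rpow hAB.le (by positivity), div_rpow hAB.le (by positivity),
    rpow_neg hAB.le, rpow_neg (by positivity : (0:ℝ) ≤ x ^ 2),
    hx2g, hx2a, mul_rpow hA.le hB.le, mul_rpow hA.le hB.le, hsplit, hgam, halp]
  have hc : ((x - 1) ^ γ : ℝ) ≠ 0 := by positivity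
  have hd : ((x + 1) ^ γ : ℝ) ≠ 0 := by positivity
  have he : ((x - 1) ^ α : ℝ) ≠ 0 := by positivity
  have hf : ((x + 1) ^ α : ℝ) ≠ 0 := by positivity
  have hy : (x ^ α : ℝ) ≠ 0 := by positivity
  have hz : (x ^ γ : ℝ) ≠ 0 := by positivity
  field_simp

theorem stmt_14 (α γ r : ℝ) (hα : 0 < α) (hγ : 0 < γ) (hr : r ≠ 0) :
    Filter.Tendsto
      (fun n : ℕ =>
        ((r / ((n : ℝ) - 1) ^ γ) * (r / ((n : ℝ) + 1) ^ γ) * (n : ℝ) ^ (2 * α)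
          - (r / (n : ℝ) ^ γ) ^ 2 * ((n : ℝ) + 1) ^ α * ((n : ℝ) - 1) ^ α) /
        (r ^ 2 * (n : ℝ) ^ (2 * α - 2 * γ - 2)))
      Filter.atTop (nhds (α + γ)) := by
  set g : ℝ → ℝ := fun t => (1 - t) ^ (-γ) - (1 - t) ^ α with hg_def
  have hderiv : HasDerivAt g (α + γ) 0 := by
    have h1 : HasDerivAt (fun t : ℝ => 1 - t) (-1) 0 := by
      simpa using (hasDerivAt_id (0:ℝ)).const_sub 1
    have h2 := h1.rpow_const (p := -γ) (Or.inl (by norm_num))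
    have h3 := h1.rpow_const (p := α) (Or.inl (by norm_num))
    have := h2.sub h3
    simp only [sub_zero, Real.one_rpow] at this
    rw [show α + γ = -1 * -γ * 1 - -1 * α * 1 by ring]
    exact this
  have hslope : Tendsto (slope g 0) (nhdsWithin 0 {(0:ℝ)}ᶜ) (nhds (α + γ)) :=
    hasDerivAt_iff_tendsto_slope.mp hderiv
  have ht : Tendsto (fun n : ℕ => (((n:ℝ) ^ 2)⁻¹)) atTop (nhdsWithin 0 {(0:ℝ)}ᶜ) := by
    apply tendsto_nhdsWithin_of_tendsto_nhds_of_eventually_within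
    · refine tendsto_inv_atTop_zero.comp (tendsto_atTop_mono (fun n => ?_) (tendsto_natCast_atTop_atTop (R := ℝ)))
      rcases Nat.eq_zero_or_pos n with h | h
      · simp [h]
      · have h1 : (1:ℝ) ≤ (n:ℝ) := by exact_mod_cast h
        nlinarith
    · filter_upwards [eventually_ge_atTop 1] with n hn
      have : (0:ℝ) < (n:ℝ) ^ 2 := by positivity
      simp [ne_of_gt (inv_pos.mpr this)]
  have hcomp : Tendsto (fun n : ℕ => slope g 0 (((n:ℝ) ^ 2)⁻¹)) atTop (nhds (α + γ)) :=
    hslope.comp ht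
  apply hcomp.congr'
  filter_upwards [eventually_ge_atTop 2] with n hn
  have hx : (2:ℝ) ≤ (n:ℝ) := by exact_mod_cast hn
  have hx0 : (0:ℝ) < (n:ℝ) := by linarith
  have hg0 : g 0 = 0 := by simp [hg_def]
  rw [slope_def_field, hg0, sub_zero, sub_zero, alg_14 α γ r hr (n:ℝ) hx]
end

section
/- Let b_n be the central trinomial coefficients (b_n = Σ_{k=0}^{⌊n/2⌋} C(n,2k)·C(2k,k)). Then {b_n} is log-convex for n ≥ 8: b_{n−1}·b_{n+1} > b_n^2 for all n ≥ 8. -/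
open Finset

lemma key_term (n k : ℕ) :
    (n+2) * (Nat.choose n (2*k) * Nat.choose (2*(k+1)) (k+1))
      + Nat.choose n (2*k+1) * Nat.choose (2*(k+1)) (k+1)
    = 4*(n+1) * (Nat.choose n (2*k) * Nat.choose (2*k) k) := by
  have f1 : Nat.choose (2*(k+1)) (k+1) * (k+1) = 2*(2*k+1) * Nat.choose (2*k) k := by
    have h := Nat.succ_mul_centralBinom_succ k
    simp only [Nat.centralBinom] at h
    linarith
  rcases lt_or_ge n (2*k) with h | h
  · rw [Nat.choose_eq_zero_of_lt h,
      Nat.choose_eq_zero_of_lt (show n < 2*k+1 by omega)]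
    ring
  rcases eq_or_lt_of_le h with h' | h'
  · subst h'
    rw [Nat.choose_eq_zero_of_lt (show 2*k < 2*k+1 by omega), Nat.choose_self]
    linarith [f1]
  · obtain ⟨d, rfl⟩ : ∃ d, n = 2*k+1+d := ⟨n - (2*k+1), by omega⟩
    have f2 : Nat.choose (2*k+1+d) (2*k+1) * (2*k+1) = Nat.choose (2*k+1+d) (2*k) * (d+1) := by
      have h2 := Nat.choose_succ_right_eq (2*k+1+d) (2*k)
      rw [show 2*k+1+d - 2*k = d+1 by omega] at h2
      exact h2
    apply Nat.eq_of_mul_eq_mul_left (show 0 < (k+1)*(2*k+1) by positivity)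
    zify
    zify at f1 f2
    linear_combination
      ((2*(k:ℤ)+1)*((2*k+3+(d:ℤ))*(Nat.choose (2*k+1+d) (2*k) : ℤ)
        + (Nat.choose (2*k+1+d) (2*k+1) : ℤ))) * f1
      + (2*(2*(k:ℤ)+1)*(Nat.choose (2*k) k : ℤ)) * f2

lemma sum_ext (b : ℕ → ℕ)
    (hb : ∀ n, b n = ∑ k ∈ Finset.range (n / 2 + 1),
      Nat.choose n (2 * k) * Nat.choose (2 * k) k)
    (m K : ℕ) (h : m/2+1 ≤ K) :
    ∑ k ∈ Finset.range K, Nat.choose m (2*k) * Nat.choose (2*k) k = b m := by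
  rw [hb m]
  refine (Finset.sum_subset (Finset.range_subset_range.2 h) ?_).symm
  intro x hx hx'
  simp only [Finset.mem_range] at hx hx'
  rw [Nat.choose_eq_zero_of_lt (show m < 2*x by omega)]
  ring

lemma recur (b : ℕ → ℕ)
    (hb : ∀ n, b n = ∑ k ∈ Finset.range (n / 2 + 1),
      Nat.choose n (2 * k) * Nat.choose (2 * k) k)
    (n : ℕ) :
    (n+2) * b (n+2) = (2*n+3) * b (n+1) + 3*(n+1) * b n := by
  have hA1 : ∀ j : ℕ, Nat.choose (n+1) (2*(j+1))
      = Nat.choose n (2*j+1) + Nat.choose n (2*(j+1)) := by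
    intro j
    rw [show 2*(j+1) = (2*j+1)+1 by ring]
    have := Nat.choose_succ_succ n (2*j+1)
    simp only [Nat.succ_eq_add_one] at this
    omega
  have hA2 : ∀ j : ℕ, Nat.choose (n+2) (2*(j+1))
      = Nat.choose n (2*j) + 2*Nat.choose n (2*j+1) + Nat.choose n (2*(j+1)) := by
    intro j
    have h1 := Nat.choose_succ_succ (n+1) (2*j+1)
    have h2 := Nat.choose_succ_succ n (2*j)
    have h3 := Nat.choose_succ_succ n (2*j+1)
    have e1 : n+1+1 = n+2 := by omega
    have e2 : 2*j+1+1 = 2*(j+1) := by ring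
    simp only [Nat.succ_eq_add_one, e1, e2] at h1 h2 h3
    omega
  set S1 := ∑ j ∈ range (n+1), Nat.choose n (2*j+1) * Nat.choose (2*(j+1)) (j+1) with hS1
  set S2 := ∑ j ∈ range (n+1), Nat.choose n (2*j) * Nat.choose (2*(j+1)) (j+1) with hS2
  have e0 : ∑ k ∈ range (n+2), Nat.choose n (2*k) * Nat.choose (2*k) k = b n :=
    sum_ext b hb n (n+2) (by omega)
  have e0' : ∑ k ∈ range (n+1), Nat.choose n (2*k) * Nat.choose (2*k) k = b n :=
    sum_ext b hb n (n+1) (by omega)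
  have l0 : b n = (∑ j ∈ range (n+1), Nat.choose n (2*(j+1)) * Nat.choose (2*(j+1)) (j+1)) + 1 := by
    rw [← e0, Finset.sum_range_succ' (fun k => Nat.choose n (2*k) * Nat.choose (2*k) k) (n+1)]
    norm_num
  have d1 : b (n+1) = b n + S1 := by
    have l1 : b (n+1)
        = (∑ j ∈ range (n+1), Nat.choose (n+1) (2*(j+1)) * Nat.choose (2*(j+1)) (j+1)) + 1 := by
      rw [← sum_ext b hb (n+1) (n+2) (by omega),
        Finset.sum_range_succ' (fun k => Nat.choose (n+1) (2*k) * Nat.choose (2*k) k) (n+1)]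
      norm_num
    have hc : ∑ j ∈ range (n+1), Nat.choose (n+1) (2*(j+1)) * Nat.choose (2*(j+1)) (j+1)
        = ∑ j ∈ range (n+1), (Nat.choose n (2*j+1) * Nat.choose (2*(j+1)) (j+1)
            + Nat.choose n (2*(j+1)) * Nat.choose (2*(j+1)) (j+1)) :=
      Finset.sum_congr rfl (fun j _ => by rw [hA1 j, add_mul])
    rw [l1, hc, Finset.sum_add_distrib, l0, ← hS1]
    omega
  have d2 : b (n+2) = b n + 2*S1 + S2 := by
    have l2 : b (n+2)
        = (∑ j ∈ range (n+1), Nat.choose (n+2) (2*(j+1)) * Nat.choose (2*(j+1)) (j+1)) + 1 := by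
      rw [← sum_ext b hb (n+2) (n+2) (by omega),
        Finset.sum_range_succ' (fun k => Nat.choose (n+2) (2*k) * Nat.choose (2*k) k) (n+1)]
      norm_num
    have hc : ∑ j ∈ range (n+1), Nat.choose (n+2) (2*(j+1)) * Nat.choose (2*(j+1)) (j+1)
        = ∑ j ∈ range (n+1), (Nat.choose n (2*j) * Nat.choose (2*(j+1)) (j+1)
            + 2*(Nat.choose n (2*j+1) * Nat.choose (2*(j+1)) (j+1))
            + Nat.choose n (2*(j+1)) * Nat.choose (2*(j+1)) (j+1)) :=
      Finset.sum_congr rfl (fun j _ => by rw [hA2 j]; ring)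
    have hm : ∑ j ∈ range (n+1), 2*(Nat.choose n (2*j+1) * Nat.choose (2*(j+1)) (j+1)) = 2*S1 := by
      rw [hS1, Finset.mul_sum]
    rw [l2, hc, Finset.sum_add_distrib, Finset.sum_add_distrib, hm, l0, ← hS2]
    omega
  have hK : (n+2) * S2 + S1 = 4*(n+1) * b n := by
    rw [← e0', hS1, hS2, Finset.mul_sum, Finset.mul_sum, ← Finset.sum_add_distrib]
    exact Finset.sum_congr rfl (fun k _ => key_term n k)
  rw [d1, d2]
  nlinarith [hK]

lemma bpos (b : ℕ → ℕ)
    (hb : ∀ n, b n = ∑ k ∈ Finset.range (n / 2 + 1),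
      Nat.choose n (2 * k) * Nat.choose (2 * k) k)
    (n : ℕ) : 0 < b n := by
  rw [hb n]
  refine Finset.sum_pos ?_ ⟨0, Finset.mem_range.2 (by omega)⟩
  intro k hk
  simp only [Finset.mem_range] at hk
  exact Nat.mul_pos (Nat.choose_pos (by omega)) (Nat.choose_pos (by omega))

lemma polyP1 (n : ℤ) (hn : 7 ≤ n) :
    (48*(n+1)^3-24*(n+1)^2+27*(n+1)-32)*(n+2)*(48*n^3-24*n^2+27*n-16)
      ≤ 16*(n+1)^3*(2*n+3)*(48*n^3-24*n^2+27*n-16) + 768*n^3*(n+1)^4 := by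
  have h : 0 ≤ n - 7 := by linarith
  nlinarith [mul_nonneg h h, mul_nonneg (mul_nonneg h h) h,
    mul_nonneg (mul_nonneg (mul_nonneg h h) h) h]

lemma polyP2 (n : ℤ) (hn : 7 ≤ n) :
    16*(n+1)^3*(2*n+3)*(48*n^3-24*n^2+27*n-32) + 768*n^3*(n+1)^4
      ≤ (48*(n+1)^3-24*(n+1)^2+27*(n+1)-16)*(n+2)*(48*n^3-24*n^2+27*n-32) := by
  have h : 0 ≤ n - 7 := by linarith
  nlinarith [mul_nonneg h h, mul_nonneg (mul_nonneg h h) h,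
    mul_nonneg (mul_nonneg (mul_nonneg h h) h) h]

lemma polyP3 (n : ℤ) (hn : 7 ≤ n) :
    0 ≤ (n+2)*(48*n^3-24*n^2+27*n-16) - (2*n+3)*(16*n^3) := by
  have h : 0 ≤ n - 7 := by linarith
  nlinarith [mul_nonneg h h, mul_nonneg (mul_nonneg h h) h,
    mul_nonneg (mul_nonneg (mul_nonneg h h) h) h]

lemma polyP4 (n : ℤ) (hn : 7 ≤ n) :
    ((n+2)*(48*n^3-24*n^2+27*n-16) - (2*n+3)*(16*n^3))*(48*n^3-24*n^2+27*n-16)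
      < 768*n^6*(n+1) := by
  have h : 0 ≤ n - 7 := by linarith
  nlinarith [mul_nonneg h h, mul_nonneg (mul_nonneg h h) h,
    mul_nonneg (mul_nonneg (mul_nonneg h h) h) h,
    mul_nonneg (mul_nonneg (mul_nonneg (mul_nonneg h h) h) h) h]

lemma polyLpos (n : ℤ) (hn : 7 ≤ n) : (0:ℤ) < 48*n^3-24*n^2+27*n-32 := by
  nlinarith [sq_nonneg n]

lemma polyUpos (n : ℤ) (hn : 7 ≤ n) : (0:ℤ) < 48*n^3-24*n^2+27*n-16 := by
  nlinarith [sq_nonneg n]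


lemma final_step (w x y z : ℤ) (hw : 7 ≤ w) (hy : 1 ≤ y) (hx : 0 ≤ x)
    (hrec : (w+2)*z = (2*w+3)*x + 3*(w+1)*y)
    (hU : 16*w^3*x ≤ (48*w^3-24*w^2+27*w-16)*y) :
    x^2 < y*z := by
  have hq : 0 ≤ (w+2)*(48*w^3-24*w^2+27*w-16) - (2*w+3)*(16*w^3) := by
    have h : 0 ≤ w - 7 := by linarith
    nlinarith [mul_nonneg h h, mul_nonneg (mul_nonneg h h) h,
      mul_nonneg (mul_nonneg (mul_nonneg h h) h) h]
  have hs : ((w+2)*(48*w^3-24*w^2+27*w-16) - (2*w+3)*(16*w^3))*(48*w^3-24*w^2+27*w-16)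
      < 768*w^6*(w+1) := by
    have h : 0 ≤ w - 7 := by linarith
    nlinarith [mul_nonneg h h, mul_nonneg (mul_nonneg h h) h,
      mul_nonneg (mul_nonneg (mul_nonneg h h) h) h,
      mul_nonneg (mul_nonneg (mul_nonneg (mul_nonneg h h) h) h) h]
  have hwpos : (0:ℤ) < w := by linarith
  have hDx : 0 ≤ (w+2)*(16*w^3*x) := by positivity
  have h1 : (w+2)*(16*w^3*x)*(16*w^3*x) ≤ (w+2)*(16*w^3*x)*((48*w^3-24*w^2+27*w-16)*y) :=
    mul_le_mul_of_nonneg_left hU hDx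
  have hc : 0 ≤ ((w+2)*(48*w^3-24*w^2+27*w-16) - (2*w+3)*(16*w^3))*y :=
    mul_nonneg hq (by linarith)
  have h2 : (((w+2)*(48*w^3-24*w^2+27*w-16) - (2*w+3)*(16*w^3))*y)*(16*w^3*x)
      ≤ (((w+2)*(48*w^3-24*w^2+27*w-16) - (2*w+3)*(16*w^3))*y)*((48*w^3-24*w^2+27*w-16)*y) :=
    mul_le_mul_of_nonneg_left hU hc
  have h3 : (((w+2)*(48*w^3-24*w^2+27*w-16) - (2*w+3)*(16*w^3))*(48*w^3-24*w^2+27*w-16))*(y*y)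
      < (768*w^6*(w+1))*(y*y) :=
    mul_lt_mul_of_pos_right hs (by nlinarith)
  -- combine: (w+2)*(16w^3)^2*x^2 < (2w+3)*(16w^3)^2*x*y + 3(w+1)*(16w^3)^2*y^2
  have hkey : (w+2)*(16*w^3)^2*x^2 < (16*w^3)^2*((2*w+3)*(x*y) + 3*(w+1)*(y*y)) := by
    nlinarith [h1, h2, h3]
  have h4 : (w+2)*(16*w^3)^2*(y*z) = (16*w^3)^2*y*((2*w+3)*x + 3*(w+1)*y) := by
    calc (w+2)*(16*w^3)^2*(y*z) = (16*w^3)^2*y*((w+2)*z) := by ring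
      _ = (16*w^3)^2*y*((2*w+3)*x + 3*(w+1)*y) := by rw [hrec]
  refine lt_of_mul_lt_mul_left (a := (w+2)*(16*w^3)^2) ?_ (by positivity)
  calc (w+2)*(16*w^3)^2*x^2 < (16*w^3)^2*((2*w+3)*(x*y) + 3*(w+1)*(y*y)) := hkey
    _ = (w+2)*(16*w^3)^2*(y*z) := by rw [h4]; ring

lemma bounds (b : ℕ → ℕ)
    (hb : ∀ n, b n = ∑ k ∈ Finset.range (n / 2 + 1),
      Nat.choose n (2 * k) * Nat.choose (2 * k) k) :
    ∀ n : ℕ, 7 ≤ n →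
      (48*(n:ℤ)^3-24*(n:ℤ)^2+27*(n:ℤ)-32) * (b n : ℤ) ≤ 16*(n:ℤ)^3 * (b (n+1) : ℤ) ∧
      16*(n:ℤ)^3 * (b (n+1) : ℤ) ≤ (48*(n:ℤ)^3-24*(n:ℤ)^2+27*(n:ℤ)-16) * (b n : ℤ) := by
  intro n hn
  induction n, hn using Nat.le_induction with
  | base =>
    have h7 : b 7 = 393 := by rw [hb]; decide
    have h8 : b 8 = 1107 := by rw [hb]; decide
    rw [h7, h8]
    norm_num
  | succ n hn ih =>
    obtain ⟨hL, hU⟩ := ih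
    have hnZ : (7:ℤ) ≤ (n:ℤ) := by exact_mod_cast hn
    have hrecZ : ((n:ℤ)+2) * (b (n+2) : ℤ)
        = (2*(n:ℤ)+3) * (b (n+1) : ℤ) + 3*((n:ℤ)+1) * (b n : ℤ) := by
      exact_mod_cast recur b hb n
    have hb1 : (0:ℤ) ≤ (b (n+1) : ℤ) := by positivity
    have hLpos := polyLpos (n:ℤ) hnZ
    have hUpos := polyUpos (n:ℤ) hnZ
    push_cast
    constructor
    · -- lower bound at n+1
      refine le_of_mul_le_mul_left ?_
        (mul_pos (show (0:ℤ) < (n:ℤ)+2 by linarith) hUpos)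
      have h1 : 0 ≤ (16*((n:ℤ)+1)^3*(2*(n:ℤ)+3)*(48*(n:ℤ)^3-24*(n:ℤ)^2+27*(n:ℤ)-16)
          + 768*(n:ℤ)^3*((n:ℤ)+1)^4
          - (48*((n:ℤ)+1)^3-24*((n:ℤ)+1)^2+27*((n:ℤ)+1)-32)*((n:ℤ)+2)*(48*(n:ℤ)^3-24*(n:ℤ)^2+27*(n:ℤ)-16))
          * (b (n+1) : ℤ) :=
        mul_nonneg (by linarith [polyP1 (n:ℤ) hnZ]) hb1
      have h2 : 0 ≤ 48*((n:ℤ)+1)^4 *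
          ((48*(n:ℤ)^3-24*(n:ℤ)^2+27*(n:ℤ)-16) * (b n : ℤ) - 16*(n:ℤ)^3 * (b (n+1) : ℤ)) :=
        mul_nonneg (by positivity) (by linarith)
      have h3 := congrArg (fun t : ℤ =>
        16*((n:ℤ)+1)^3*(48*(n:ℤ)^3-24*(n:ℤ)^2+27*(n:ℤ)-16) * t) hrecZ
      beta_reduce at h3
      nlinarith [h1, h2, h3]
    · -- upper bound at n+1
      refine le_of_mul_le_mul_left ?_
        (mul_pos (show (0:ℤ) < (n:ℤ)+2 by linarith) hLpos)
      have h1 : 0 ≤ ((48*((n:ℤ)+1)^3-24*((n:ℤ)+1)^2+27*((n:ℤ)+1)-16)*((n:ℤ)+2)*(48*(n:ℤ)^3-24*(n:ℤ)^2+27*(n:ℤ)-32)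
          - (16*((n:ℤ)+1)^3*(2*(n:ℤ)+3)*(48*(n:ℤ)^3-24*(n:ℤ)^2+27*(n:ℤ)-32)
          + 768*(n:ℤ)^3*((n:ℤ)+1)^4))
          * (b (n+1) : ℤ) :=
        mul_nonneg (by linarith [polyP2 (n:ℤ) hnZ]) hb1
      have h2 : 0 ≤ 48*((n:ℤ)+1)^4 *
          (16*(n:ℤ)^3 * (b (n+1) : ℤ) - (48*(n:ℤ)^3-24*(n:ℤ)^2+27*(n:ℤ)-32) * (b n : ℤ)) :=
        mul_nonneg (by positivity) (by linarith)
      have h3 := congrArg (fun t : ℤ =>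
        16*((n:ℤ)+1)^3*(48*(n:ℤ)^3-24*(n:ℤ)^2+27*(n:ℤ)-32) * t) hrecZ
      beta_reduce at h3
      nlinarith [h1, h2, h3]

theorem stmt_16
    (b : ℕ → ℕ)
    (hb : ∀ n, b n = ∑ k ∈ Finset.range (n / 2 + 1),
      Nat.choose n (2 * k) * Nat.choose (2 * k) k) :
    ∀ n, 8 ≤ n → b (n - 1) * b (n + 1) > (b n) ^ 2 := by
  intro n hn
  obtain ⟨m, rfl⟩ := Nat.exists_eq_add_of_le hn
  rw [show 8 + m - 1 = m + 7 by omega, show 8 + m + 1 = m + 9 by omega,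
    show 8 + m = m + 8 by omega]
  have hU := (bounds b hb (m+7) (by omega)).2
  have hrec := recur b hb (m+7)
  rw [show m+7+2 = m+9 by omega, show m+7+1 = m+8 by omega] at hrec
  have hw : (7:ℤ) ≤ (m:ℤ)+7 := by linarith [Int.natCast_nonneg m]
  have hy : (1:ℤ) ≤ (b (m+7) : ℤ) := by exact_mod_cast bpos b hb (m+7)
  have hx : (0:ℤ) ≤ (b (m+8) : ℤ) := Int.natCast_nonneg _
  have hrecZ : (((m:ℤ)+7)+2) * (b (m+9) : ℤ)
      = (2*((m:ℤ)+7)+3) * (b (m+8) : ℤ) + 3*(((m:ℤ)+7)+1) * (b (m+7) : ℤ) := by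
    exact_mod_cast hrec
  have hUZ : 16*((m:ℤ)+7)^3 * (b (m+8) : ℤ)
      ≤ (48*((m:ℤ)+7)^3-24*((m:ℤ)+7)^2+27*((m:ℤ)+7)-16) * (b (m+7) : ℤ) := by
    have := hU
    push_cast at this ⊢
    linarith
  have := final_step ((m:ℤ)+7) (b (m+8)) (b (m+7)) (b (m+9)) hw hy hx hrecZ hUZ
  zify
  nlinarith [this]
end
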